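/- Let (Ω, μ) be a measure space, H a real inner product space, and 1 < p ≤ 2. Let σ₁, σ₂ : Ω → H be measurable functions in L^p (MemLp p). Then ∫ ⟨F_p(σ₁(x)) − F_p(σ₂(x)), σ₁(x) − σ₂(x)⟩ dμ(x) ≥ ∫ (‖σ₁(x)‖^{p−1} − ‖σ₂(x)‖^{p−1})(‖σ₁(x)‖ − ‖σ₂(x)‖) dμ(x) ≥ 0. -/

import Mathlib

open MeasureTheory Real
open scoped RealInnerProductSpace

/-- The p-Laplacian-type map `F_p : H → H`, `F_p x = ‖x‖^(p-2) • x` for `x ≠ 0`,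
`F_p 0 = 0`. -/
noncomputable def Fp {H : Type*} [NormedAddCommGroup H] [NormedSpace ℝ H] (p : ℝ) (x : H) : H :=
  open scoped Classical in
  if x = 0 then 0 else ‖x‖ ^ (p - 2) • x

lemma Fp_eq {H : Type*} [NormedAddCommGroup H] [NormedSpace ℝ H] (p : ℝ) (x : H) :
    Fp p x = ‖x‖ ^ (p - 2) • x := by
  unfold Fp; split_ifs with h <;> simp [h]

lemma rpow_sub_one_mul {t : ℝ} (ht : 0 ≤ t) {q : ℝ} (hq : q ≠ 0) :
    t ^ (q - 1) * t = t ^ q := by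
  rcases eq_or_lt_of_le ht with h | h
  · rw [← h]; rw [mul_zero, Real.zero_rpow hq]
  · calc t ^ (q - 1) * t = t ^ (q - 1) * t ^ (1 : ℝ) := by rw [Real.rpow_one]
      _ = t ^ (q - 1 + 1) := (Real.rpow_add h _ _).symm
      _ = t ^ q := by ring_nf

lemma cross_bound {A B : ℝ} (hA : 0 ≤ A) (hB : 0 ≤ B) {p : ℝ} (hp : 1 < p) :
    A ^ (p - 1) * B ≤ A ^ p + B ^ p := by
  have hp0 : (0:ℝ) ≤ p - 1 := by linarith
  have hpne : p ≠ 0 := by positivity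
  rcases le_total A B with h | h
  · calc A ^ (p - 1) * B ≤ B ^ (p - 1) * B := by
          exact mul_le_mul_of_nonneg_right (Real.rpow_le_rpow hA h hp0) hB
      _ = B ^ p := rpow_sub_one_mul hB hpne
      _ ≤ A ^ p + B ^ p := le_add_of_nonneg_left (Real.rpow_nonneg hA p)
  · calc A ^ (p - 1) * B ≤ A ^ (p - 1) * A := by
          exact mul_le_mul_of_nonneg_left h (Real.rpow_nonneg hA _)
      _ = A ^ p := rpow_sub_one_mul hA hpne
      _ ≤ A ^ p + B ^ p := le_add_of_nonneg_right (Real.rpow_nonneg hB p)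

lemma key_nonneg {H : Type*} [NormedAddCommGroup H] [InnerProductSpace ℝ H]
    {p : ℝ} (hp1 : 1 < p) (a b : H) :
    0 ≤ (‖a‖ ^ (p - 1) - ‖b‖ ^ (p - 1)) * (‖a‖ - ‖b‖) := by
  have hp0 : (0:ℝ) ≤ p - 1 := by linarith
  rcases le_total ‖a‖ ‖b‖ with h | h
  · exact mul_nonneg_iff.2 (Or.inr
      ⟨sub_nonpos.2 (Real.rpow_le_rpow (norm_nonneg a) h hp0), sub_nonpos.2 h⟩)
  · exact mul_nonneg
      (sub_nonneg.2 (Real.rpow_le_rpow (norm_nonneg b) h hp0)) (sub_nonneg.2 h)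

lemma key_ineq {H : Type*} [NormedAddCommGroup H] [InnerProductSpace ℝ H]
    {p : ℝ} (hp1 : 1 < p) (a b : H) :
    (‖a‖ ^ (p - 1) - ‖b‖ ^ (p - 1)) * (‖a‖ - ‖b‖) ≤ ⟪Fp p a - Fp p b, a - b⟫ := by
  have hCS : ⟪a, b⟫ ≤ ‖a‖ * ‖b‖ := real_inner_le_norm a b
  have ha2 : (0:ℝ) ≤ ‖a‖ ^ (p - 2) := Real.rpow_nonneg (norm_nonneg a) _
  have hb2 : (0:ℝ) ≤ ‖b‖ ^ (p - 2) := Real.rpow_nonneg (norm_nonneg b) _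
  have ea : ‖a‖ ^ (p - 1) = ‖a‖ ^ (p - 2) * ‖a‖ := by
    rw [show p - 2 = (p - 1) - 1 by ring]
    exact (rpow_sub_one_mul (norm_nonneg a) (q := p - 1) (by intro h; linarith)).symm
  have eb : ‖b‖ ^ (p - 1) = ‖b‖ ^ (p - 2) * ‖b‖ := by
    rw [show p - 2 = (p - 1) - 1 by ring]
    exact (rpow_sub_one_mul (norm_nonneg b) (q := p - 1) (by intro h; linarith)).symm
  have hexp : ⟪Fp p a - Fp p b, a - b⟫ =
      ‖a‖ ^ (p - 2) * (‖a‖ * ‖a‖) + ‖b‖ ^ (p - 2) * (‖b‖ * ‖b‖)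
        - (‖a‖ ^ (p - 2) + ‖b‖ ^ (p - 2)) * ⟪a, b⟫ := by
    rw [Fp_eq, Fp_eq, inner_sub_left, inner_sub_right, inner_sub_right,
      real_inner_smul_left, real_inner_smul_left, real_inner_smul_left, real_inner_smul_left,
      real_inner_self_eq_norm_mul_norm, real_inner_self_eq_norm_mul_norm,
      real_inner_comm b a]
    ring
  rw [hexp, ea, eb]
  nlinarith [mul_nonneg ha2 (sub_nonneg.2 hCS), mul_nonneg hb2 (sub_nonneg.2 hCS)]

lemma norm_Fp {H : Type*} [NormedAddCommGroup H] [NormedSpace ℝ H]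
    {p : ℝ} (hp1 : 1 < p) (a : H) : ‖Fp p a‖ = ‖a‖ ^ (p - 1) := by
  rw [Fp_eq, norm_smul, Real.norm_eq_abs,
    abs_of_nonneg (Real.rpow_nonneg (norm_nonneg a) _),
    show p - 2 = (p - 1) - 1 by ring,
    rpow_sub_one_mul (norm_nonneg a) (q := p - 1) (by intro h; linarith)]

lemma inner_Fp_bound {H : Type*} [NormedAddCommGroup H] [InnerProductSpace ℝ H]
    {p : ℝ} (hp1 : 1 < p) (a b : H) :
    ‖⟪Fp p a - Fp p b, a - b⟫‖ ≤ 2 * (‖a‖ ^ p + ‖b‖ ^ p) := by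
  have hpne : p ≠ 0 := by positivity
  have h1 : ‖⟪Fp p a - Fp p b, a - b⟫‖ ≤ ‖Fp p a - Fp p b‖ * ‖a - b‖ := by
    rw [Real.norm_eq_abs]; exact abs_real_inner_le_norm _ _
  have h2 : ‖Fp p a - Fp p b‖ ≤ ‖a‖ ^ (p - 1) + ‖b‖ ^ (p - 1) := by
    calc ‖Fp p a - Fp p b‖ ≤ ‖Fp p a‖ + ‖Fp p b‖ := norm_sub_le _ _
      _ = ‖a‖ ^ (p - 1) + ‖b‖ ^ (p - 1) := by rw [norm_Fp hp1, norm_Fp hp1]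
  have h3 : ‖a - b‖ ≤ ‖a‖ + ‖b‖ := norm_sub_le _ _
  have h4 : (‖a‖ ^ (p - 1) + ‖b‖ ^ (p - 1)) * (‖a‖ + ‖b‖) ≤ 2 * (‖a‖ ^ p + ‖b‖ ^ p) := by
    have c3 := key_nonneg hp1 a b
    have e1 := rpow_sub_one_mul (norm_nonneg a) (q := p) hpne
    have e2 := rpow_sub_one_mul (norm_nonneg b) (q := p) hpne
    nlinarith [c3, e1, e2]
  calc ‖⟪Fp p a - Fp p b, a - b⟫‖ ≤ ‖Fp p a - Fp p b‖ * ‖a - b‖ := h1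
    _ ≤ (‖a‖ ^ (p - 1) + ‖b‖ ^ (p - 1)) * (‖a‖ + ‖b‖) := by
        apply mul_le_mul h2 h3 (norm_nonneg _)
        positivity
    _ ≤ 2 * (‖a‖ ^ p + ‖b‖ ^ p) := h4

/-- The paper's monotonicity estimate for the Gâteaux derivative of the viscous energy
functional: for `1 < p ≤ 2` and `σ₁, σ₂ ∈ L^p(Ω; H)`,
`∫ ⟨F_p(σ₁) − F_p(σ₂), σ₁ − σ₂⟩ dμ ≥ ∫ (‖σ₁‖^(p−1) − ‖σ₂‖^(p−1))(‖σ₁‖ − ‖σ₂‖) dμ ≥ 0`. -/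
theorem integral_Fp_monotone {Ω H : Type*} [MeasurableSpace Ω]
    [NormedAddCommGroup H] [InnerProductSpace ℝ H] (μ : Measure Ω)
    (p : ℝ) (hp1 : 1 < p) (hp2 : p ≤ 2) (σ₁ σ₂ : Ω → H)
    (h₁ : MemLp σ₁ (ENNReal.ofReal p) μ) (h₂ : MemLp σ₂ (ENNReal.ofReal p) μ) :
    ∫ x, ⟪Fp p (σ₁ x) - Fp p (σ₂ x), σ₁ x - σ₂ x⟫ ∂μ ≥
      ∫ x, (‖σ₁ x‖ ^ (p - 1) - ‖σ₂ x‖ ^ (p - 1)) * (‖σ₁ x‖ - ‖σ₂ x‖) ∂μ ∧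
    ∫ x, (‖σ₁ x‖ ^ (p - 1) - ‖σ₂ x‖ ^ (p - 1)) * (‖σ₁ x‖ - ‖σ₂ x‖) ∂μ ≥ 0 := by
  have hpne : p ≠ 0 := by positivity
  have hptoReal : (ENNReal.ofReal p).toReal = p := ENNReal.toReal_ofReal (by positivity)
  -- AE strong measurability of x ↦ Fp p (σ x)
  have hFmeas : ∀ (σ : Ω → H), MemLp σ (ENNReal.ofReal p) μ →
      AEStronglyMeasurable (fun x => Fp p (σ x)) μ := by
    intro σ hσ
    simp only [Fp_eq]
    exact ((hσ.aestronglyMeasurable.norm.aemeasurable.pow_const (p - 2)).aestronglyMeasurable).smul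
      hσ.aestronglyMeasurable
  -- integrability of ‖σ‖^p
  have hInt₁ : Integrable (fun x => ‖σ₁ x‖ ^ p) μ := by
    have := h₁.integrable_norm_rpow (by simp [ENNReal.ofReal_eq_zero]; linarith)
      ENNReal.ofReal_ne_top
    rwa [hptoReal] at this
  have hInt₂ : Integrable (fun x => ‖σ₂ x‖ ^ p) μ := by
    have := h₂.integrable_norm_rpow (by simp [ENNReal.ofReal_eq_zero]; linarith)
      ENNReal.ofReal_ne_top
    rwa [hptoReal] at this
  -- integrability of the inner-product integrand
  have hfInt : Integrable (fun x => ⟪Fp p (σ₁ x) - Fp p (σ₂ x), σ₁ x - σ₂ x⟫) μ := by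
    apply Integrable.mono' ((hInt₁.add hInt₂).const_mul 2)
    · exact ((hFmeas σ₁ h₁).sub (hFmeas σ₂ h₂)).inner
        (h₁.aestronglyMeasurable.sub h₂.aestronglyMeasurable)
    · filter_upwards with x
      exact inner_Fp_bound hp1 (σ₁ x) (σ₂ x)
  constructor
  · exact integral_mono_of_nonneg
      (Filter.Eventually.of_forall fun x => key_nonneg hp1 (σ₁ x) (σ₂ x)) hfInt
      (Filter.Eventually.of_forall fun x => key_ineq hp1 (σ₁ x) (σ₂ x))
  · exact integral_nonneg fun x => key_nonneg hp1 (σ₁ x) (σ₂ x)
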